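/- arXiv:1407.3154 — 3 statements merged into one kernel-verified Lean document; each statement's English description precedes it below -/
import Mathlib

section
/- Let w : (0,∞) → ℝ be concave and differentiable, and suppose w_λ(z) := w(λz) − log(λ)/κ converges pointwise to v(z) = C + log(κz)/κ as λ → ∞ (for some constant C), for each z in an open interval. Then λ w'(λ) → 1/κ as λ → ∞; equivalently w'(z) = 1/(κz) + o(1/z) as z → ∞. -/
open Filter

/-- Lemma 3 of the paper: if the rescaled concave value function
w_λ(z) = w(λz) − log λ/κ converges pointwise to C + log(κz)/κ on an open
interval, then λ w'(λ) → 1/κ. -/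
theorem rescaled_value_derivative_limit
    (κ C : ℝ) (hκ : 0 < κ)
    (w : ℝ → ℝ)
    (hconc : ConcaveOn ℝ (Set.Ioi 0) w)
    (hdiff : ∀ z : ℝ, 0 < z → DifferentiableAt ℝ w z)
    (a b : ℝ) (hab : a < b) (ha : 0 < a)
    (hconv : ∀ z ∈ Set.Ioo a b,
      Tendsto (fun l : ℝ => w (l * z) - Real.log l / κ) atTop
        (nhds (C + Real.log (κ * z) / κ))) :
    Tendsto (fun l : ℝ => l * deriv w l) atTop (nhds (1 / κ)) := by
  obtain ⟨m, ham, hmb⟩ : ∃ m : ℝ, a < m ∧ m < b :=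
    ⟨(a + b) / 2, by linarith, by linarith⟩
  have hm0 : 0 < m := lt_trans ha ham
  -- the rescaled difference quotient converges
  have key : ∀ z ∈ Set.Ioo a b,
      Tendsto (fun l : ℝ => m * (w ((l / m) * z) - w ((l / m) * m)) / (z - m)) atTop
        (nhds (m * ((Real.log z - Real.log m) / κ) / (z - m))) := by
    intro z hz
    have hz0 : 0 < z := lt_trans ha hz.1
    have hdiv : Tendsto (fun l : ℝ => l / m) atTop atTop :=
      tendsto_id.atTop_div_const hm0
    have h1 := (hconv z hz).comp hdiv
    have h2 := (hconv m ⟨ham, hmb⟩).comp hdiv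
    have h4 := ((h1.sub h2).const_mul m).div_const (z - m)
    have h5 : Tendsto (fun l : ℝ => m * (w ((l / m) * z) - w ((l / m) * m)) / (z - m)) atTop
        (nhds (m * ((C + Real.log (κ * z) / κ) - (C + Real.log (κ * m) / κ)) / (z - m))) :=
      h4.congr (fun l => by simp only [Function.comp]; ring)
    have heq : m * ((C + Real.log (κ * z) / κ) - (C + Real.log (κ * m) / κ)) / (z - m)
        = m * ((Real.log z - Real.log m) / κ) / (z - m) := by
      rw [Real.log_mul (ne_of_gt hκ) (ne_of_gt hz0),
        Real.log_mul (ne_of_gt hκ) (ne_of_gt hm0)]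
      ring
    rwa [heq] at h5
  -- slopes of the limit near m converge to 1/κ after rescaling
  have hslope : Tendsto (fun z : ℝ => m * ((Real.log z - Real.log m) / κ) / (z - m))
      (nhdsWithin m {m}ᶜ) (nhds (1 / κ)) := by
    have hd : HasDerivAt Real.log m⁻¹ m := Real.hasDerivAt_log (ne_of_gt hm0)
    rw [hasDerivAt_iff_tendsto_slope] at hd
    have h : Tendsto (fun z : ℝ => m * ((Real.log z - Real.log m) / κ) / (z - m))
        (nhdsWithin m {m}ᶜ) (nhds (m * m⁻¹ / κ)) :=
      ((hd.const_mul m).div_const κ).congr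
        (fun z => by rw [slope_def_field]; ring)
    rwa [mul_inv_cancel₀ (ne_of_gt hm0)] at h
  rw [tendsto_order]
  constructor
  · -- lower bound
    intro c hc
    have h1 : ∀ᶠ z in nhdsWithin m (Set.Ioi m),
        c < m * ((Real.log z - Real.log m) / κ) / (z - m) :=
      (hslope.mono_left (nhdsWithin_mono m (fun x hx => ne_of_gt hx))).eventually
        (eventually_gt_nhds hc)
    have h2 : ∀ᶠ z in nhdsWithin m (Set.Ioi m), z ∈ Set.Ioo m b :=
      Ioo_mem_nhdsGT_of_mem ⟨le_refl m, hmb⟩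
    obtain ⟨z, hz1, hz2⟩ := (h1.and h2).exists
    have hzab : z ∈ Set.Ioo a b := ⟨lt_trans ham hz2.1, hz2.2⟩
    have hg := key z hzab
    have hev := hg.eventually (eventually_gt_nhds hz1)
    filter_upwards [hev, eventually_gt_atTop (0 : ℝ)] with l hgl hl0
    have hlm : 0 < l / m := div_pos hl0 hm0
    have hmm : (l / m) * m = l := by field_simp
    have hy : l < (l / m) * z := by
      calc l = (l / m) * m := hmm.symm
        _ < (l / m) * z := by exact mul_lt_mul_of_pos_left hz2.1 hlm
    have hsl := hconc.slope_le_deriv (Set.mem_Ioi.2 hl0)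
      (Set.mem_Ioi.2 (lt_trans hl0 hy)) hy (hdiff l hl0)
    rw [slope_def_field] at hsl
    have hzm : z - m ≠ 0 := ne_of_gt (sub_pos.2 hz2.1)
    calc c < m * (w ((l / m) * z) - w ((l / m) * m)) / (z - m) := hgl
      _ = l * ((w ((l / m) * z) - w l) / ((l / m) * z - l)) := by
          rw [hmm]
          rw [show (l / m) * z - l = l * (z - m) / m by field_simp]
          field_simp
      _ ≤ l * deriv w l := mul_le_mul_of_nonneg_left hsl (le_of_lt hl0)
  · -- upper bound
    intro c hc
    have h1 : ∀ᶠ z in nhdsWithin m (Set.Iio m),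
        m * ((Real.log z - Real.log m) / κ) / (z - m) < c :=
      (hslope.mono_left (nhdsWithin_mono m (fun x hx => ne_of_lt hx))).eventually
        (eventually_lt_nhds hc)
    have h2 : ∀ᶠ z in nhdsWithin m (Set.Iio m), z ∈ Set.Ioo a m :=
      Ioo_mem_nhdsLT_of_mem ⟨ham, le_refl m⟩
    obtain ⟨z, hz1, hz2⟩ := (h1.and h2).exists
    have hzab : z ∈ Set.Ioo a b := ⟨hz2.1, lt_trans hz2.2 hmb⟩
    have hz0 : 0 < z := lt_trans ha hz2.1
    have hg := key z hzab
    have hev := hg.eventually (eventually_lt_nhds hz1)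
    filter_upwards [hev, eventually_gt_atTop (0 : ℝ)] with l hgl hl0
    have hlm : 0 < l / m := div_pos hl0 hm0
    have hmm : (l / m) * m = l := by field_simp
    have hx0 : 0 < (l / m) * z := mul_pos hlm hz0
    have hy : (l / m) * z < l := by
      calc (l / m) * z < (l / m) * m := mul_lt_mul_of_pos_left hz2.2 hlm
        _ = l := hmm
    have hsl := hconc.deriv_le_slope (Set.mem_Ioi.2 hx0)
      (Set.mem_Ioi.2 hl0) hy (hdiff l hl0)
    rw [slope_def_field] at hsl
    have hzm : z - m ≠ 0 := ne_of_lt (sub_neg.2 hz2.2)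
    have hmz : m - z ≠ 0 := ne_of_gt (sub_pos.2 hz2.2)
    have hlne : l ≠ 0 := ne_of_gt hl0
    have hmne : m ≠ 0 := ne_of_gt hm0
    calc l * deriv w l
        ≤ l * ((w l - w ((l / m) * z)) / (l - (l / m) * z)) :=
          mul_le_mul_of_nonneg_left hsl (le_of_lt hl0)
      _ = m * (w ((l / m) * z) - w ((l / m) * m)) / (z - m) := by
          rw [hmm]
          rw [show l - (l / m) * z = l * (m - z) / m by field_simp]
          field_simp
          ring
      _ < c := hgl
end

section
/- Fix constants κ > 0, γ ∈ (0,1), and d₁ ≠ 0, d₂ > 0, d₃, δ ∈ ℝ. There exist constants C₃ > 0 and γ ∈ (0,1) sufficiently close to 1 such that W⁺(z) = (z + C₃)^γ satisfies the supersolution inequality −(d₁²/2)·(W⁺')²/W⁺'' + d₂ z² W⁺'' + d₃ z W⁺' + δ W⁺' − 1 − log(W⁺') − κ W⁺ ≤ 0 for all sufficiently large z > 0. -/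
open Filter Real

set_option maxHeartbeats 1000000 in
/-- W⁺(z) = (z + C₃)^γ is a supersolution of the stationary dual HJB equation
for suitable C₃ > 0 and γ ∈ (0,1) close to 1, and all large z. -/
theorem power_supersolution_dual_HJB
    (κ d₁ d₂ d₃ δ : ℝ) (hκ : 0 < κ) (hd₁ : d₁ ≠ 0) (hd₂ : 0 < d₂) :
    ∃ C₃ : ℝ, 0 < C₃ ∧ ∃ γ : ℝ, γ ∈ Set.Ioo (0:ℝ) 1 ∧ ∃ Z : ℝ, ∀ z : ℝ, Z ≤ z →
      -(d₁^2/2) * (γ * (z + C₃) ^ (γ - 1))^2 / (γ * (γ - 1) * (z + C₃) ^ (γ - 2))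
        + d₂ * z^2 * (γ * (γ - 1) * (z + C₃) ^ (γ - 2))
        + d₃ * z * (γ * (z + C₃) ^ (γ - 1))
        + δ * (γ * (z + C₃) ^ (γ - 1))
        - 1 - Real.log (γ * (z + C₃) ^ (γ - 1))
        - κ * ((z + C₃) ^ γ) ≤ 0 := by
  refine ⟨1, one_pos, ?_⟩
  set g : ℝ := min (1/2) (κ / (2 * (d₁^2 + |d₃| + 1))) with hgdef
  have hg0 : 0 < g := lt_min (by norm_num) (by positivity)
  have hg2 : g ≤ 1/2 := min_le_left _ _
  have hgκ : g ≤ κ / (2 * (d₁^2 + |d₃| + 1)) := min_le_right _ _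
  have hg1 : g < 1 := by linarith
  have hgm : g * (2 * (d₁^2 + |d₃| + 1)) ≤ κ := by
    rw [← le_div_iff₀ (by positivity)]; exact hgκ
  have hcoef : d₁^2/2 * (g/(1-g)) + |d₃| * g ≤ κ/2 := by
    have h1g : (1:ℝ)/2 ≤ 1 - g := by linarith
    have hdiv : g/(1-g) ≤ 2 * g := by
      rw [div_le_iff₀ (by linarith)]
      nlinarith
    nlinarith [sq_nonneg d₁, abs_nonneg d₃]
  clear_value g
  set C : ℝ := |δ| - 1 - Real.log g with hCdef
  clear_value C
  -- asymptotic choice of Z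
  have hU : ∀ᶠ u in atTop, Real.log u + C ≤ κ/2 * u ^ g := by
    have hlo := (isLittleO_log_rpow_atTop hg0).def (show (0:ℝ) < κ/4 by positivity)
    have hC : ∀ᶠ u : ℝ in atTop, C ≤ κ/4 * u ^ g :=
      ((tendsto_rpow_atTop hg0).const_mul_atTop
        (show (0:ℝ) < κ/4 by positivity)).eventually_ge_atTop C
    filter_upwards [hlo, hC, eventually_ge_atTop (1:ℝ)] with u h1 h2 h3
    have hu0 : (0:ℝ) ≤ u ^ g := Real.rpow_nonneg (by linarith) g
    have hlog : Real.log u ≤ κ/4 * u ^ g := by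
      calc Real.log u ≤ ‖Real.log u‖ := le_norm_self _
        _ ≤ κ/4 * ‖u ^ g‖ := h1
        _ = κ/4 * u ^ g := by rw [Real.norm_eq_abs, abs_of_nonneg hu0]
    linarith
  have hev : ∀ᶠ z : ℝ in atTop, Real.log (z+1) + C ≤ κ/2 * (z+1) ^ g :=
    (tendsto_atTop_add_const_right atTop (1:ℝ) tendsto_id).eventually hU
  obtain ⟨Z, hZ⟩ := Filter.eventually_atTop.1 (hev.and (eventually_ge_atTop (1:ℝ)))
  refine ⟨g, ⟨hg0, hg1⟩, Z, ?_⟩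
  intro z hz
  obtain ⟨hfin, hz1⟩ := hZ z hz
  have hu : (0:ℝ) < z + 1 := by linarith
  have hu1 : (1:ℝ) < z + 1 := by linarith
  have ha0 : 0 < (z+1) ^ g := Real.rpow_pos_of_pos hu g
  have hb0 : 0 < (z+1) ^ (g-1) := Real.rpow_pos_of_pos hu (g-1)
  have hc0 : 0 < (z+1) ^ (g-2) := Real.rpow_pos_of_pos hu (g-2)
  have ha1 : 1 ≤ (z+1) ^ g := by
    have h := Real.rpow_le_rpow_of_exponent_le hu1.le (show (0:ℝ) ≤ g by linarith)
    rwa [Real.rpow_zero] at h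
  have hb1 : (z+1) ^ (g-1) ≤ 1 := by
    have h := Real.rpow_le_rpow_of_exponent_le hu1.le (show g - 1 ≤ (0:ℝ) by linarith)
    rwa [Real.rpow_zero] at h
  have hzb : z * (z+1) ^ (g-1) ≤ (z+1) ^ g := by
    have h2 : (z+1) * (z+1) ^ (g-1) = (z+1) ^ g := by
      calc (z+1) * (z+1) ^ (g-1) = (z+1) ^ (1:ℝ) * (z+1) ^ (g-1) := by
            rw [Real.rpow_one]
        _ = (z+1) ^ (1 + (g-1)) := (Real.rpow_add hu 1 (g-1)).symm
        _ = (z+1) ^ g := by norm_num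
    nlinarith
  -- rewrite the fraction term
  have hg1' : g - 1 ≠ 0 := by linarith
  have hkey : (g * (z+1) ^ (g-1))^2 / (g * (g-1) * (z+1) ^ (g-2))
      = g/(g-1) * (z+1) ^ g := by
    have hbb : (z+1) ^ (g-1) * (z+1) ^ (g-1) = (z+1) ^ (g-2) * (z+1) ^ g := by
      rw [← Real.rpow_add hu, ← Real.rpow_add hu]; ring_nf
    have hne : g * (g-1) * (z+1) ^ (g-2) ≠ 0 :=
      mul_ne_zero (mul_ne_zero hg0.ne' hg1') hc0.ne'
    rw [div_eq_iff hne]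
    field_simp
    linear_combination hbb
  rw [mul_div_assoc, hkey, Real.log_mul hg0.ne' hb0.ne', Real.log_rpow hu]
  -- per-term bounds
  have e1 : -(d₁^2/2) * (g/(g-1) * (z+1) ^ g)
      ≤ (κ/2 - |d₃| * g) * (z+1) ^ g := by
    have hne2 : (1:ℝ) - g ≠ 0 := by linarith
    have heq : -(d₁^2/2) * (g/(g-1) * (z+1) ^ g)
        = (d₁^2/2 * (g/(1-g))) * (z+1) ^ g := by
      field_simp
      ring
    rw [heq]
    exact mul_le_mul_of_nonneg_right (by linarith) ha0.le
  have e2 : d₂ * z^2 * (g * (g-1) * (z+1) ^ (g-2)) ≤ 0 := by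
    have hgc : g * (g-1) * (z+1) ^ (g-2) ≤ 0 := by nlinarith [mul_pos hg0 hc0]
    exact mul_nonpos_of_nonneg_of_nonpos (mul_nonneg hd₂.le (sq_nonneg z)) hgc
  have e3 : d₃ * z * (g * (z+1) ^ (g-1)) ≤ |d₃| * g * (z+1) ^ g := by
    have h0 : 0 ≤ z * (g * (z+1) ^ (g-1)) :=
      mul_nonneg (by linarith) (mul_nonneg hg0.le hb0.le)
    calc d₃ * z * (g * (z+1) ^ (g-1)) = d₃ * (z * (g * (z+1) ^ (g-1))) := by ring
      _ ≤ |d₃| * (z * (g * (z+1) ^ (g-1))) :=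
          mul_le_mul_of_nonneg_right (le_abs_self d₃) h0
      _ = |d₃| * g * (z * (z+1) ^ (g-1)) := by ring
      _ ≤ |d₃| * g * ((z+1) ^ g) :=
          mul_le_mul_of_nonneg_left hzb (mul_nonneg (abs_nonneg d₃) hg0.le)
  have e4 : δ * (g * (z+1) ^ (g-1)) ≤ |δ| := by
    have hgb : g * (z+1) ^ (g-1) ≤ 1 := by nlinarith
    have hgb0 : 0 ≤ g * (z+1) ^ (g-1) := mul_nonneg hg0.le hb0.le
    calc δ * (g * (z+1) ^ (g-1)) ≤ |δ| * (g * (z+1) ^ (g-1)) :=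
          mul_le_mul_of_nonneg_right (le_abs_self δ) hgb0
      _ ≤ |δ| * 1 := mul_le_mul_of_nonneg_left hgb (abs_nonneg δ)
      _ = |δ| := mul_one _
  have hL : 0 ≤ Real.log (z+1) := Real.log_nonneg (by linarith)
  have e5 : (1 - g) * Real.log (z+1) ≤ Real.log (z+1) := by
    nlinarith [mul_nonneg hg0.le hL]
  linarith [e1, e2, e3, e4, e5, hfin]
end

section
/- Fix constants κ > 0, d₁, d₂ > 0, d₃, δ ∈ ℝ. There exist constants C₁, C₂ > 0 such that W⁻(z) = C₁ log(z + C₂) satisfies the subsolution inequality −(d₁²/2)·(W⁻')²/W⁻'' + d₂ z² W⁻'' + d₃ z W⁻' + δ W⁻' − 1 − log(W⁻') − κ W⁻ ≥ 0 for all sufficiently large z > 0. -/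
/-- W⁻(z) = C₁ log(z + C₂) is a subsolution of the stationary dual HJB equation
for suitable C₁, C₂ > 0 and all large z. -/
theorem log_subsolution_dual_HJB
    (κ d₁ d₂ d₃ δ : ℝ) (hκ : 0 < κ) (hd₁ : 0 < d₁) (hd₂ : 0 < d₂) :
    ∃ C₁ : ℝ, 0 < C₁ ∧ ∃ C₂ : ℝ, 0 < C₂ ∧ ∃ Z : ℝ, ∀ z : ℝ, Z ≤ z →
      0 ≤ -(d₁^2/2) * (C₁ / (z + C₂))^2 / (-(C₁ / (z + C₂)^2))
        + d₂ * z^2 * (-(C₁ / (z + C₂)^2))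
        + d₃ * z * (C₁ / (z + C₂))
        + δ * (C₁ / (z + C₂))
        - 1 - Real.log (C₁ / (z + C₂))
        - κ * (C₁ * Real.log (z + C₂)) := by
  set C₁ : ℝ := 1 / (2 * κ) with hC₁def
  have hC₁ : 0 < C₁ := by positivity
  refine ⟨C₁, hC₁, 1, one_pos,
    max 1 (Real.exp (2 * (d₂ * C₁ + |d₃| * C₁ + |δ| * C₁ + 1 + |Real.log C₁|))), ?_⟩
  intro z hz
  have hz1 : (1 : ℝ) ≤ z := le_trans (le_max_left _ _) hz
  have hzexp : Real.exp (2 * (d₂ * C₁ + |d₃| * C₁ + |δ| * C₁ + 1 + |Real.log C₁|)) ≤ z :=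
    le_trans (le_max_right _ _) hz
  have hz0 : 0 < z := by linarith
  have hz1' : 0 < z + 1 := by linarith
  -- the first (Hamiltonian) term is the constant (d₁²/2)·C₁
  have h1 : -(d₁^2/2) * (C₁ / (z + 1))^2 / (-(C₁ / (z + 1)^2)) = (d₁^2/2) * C₁ := by
    field_simp
  have hlogdiv : Real.log (C₁ / (z + 1)) = Real.log C₁ - Real.log (z + 1) :=
    Real.log_div (ne_of_gt hC₁) (ne_of_gt hz1')
  rw [h1, hlogdiv]
  have hκC : κ * C₁ = 1 / 2 := by
    rw [hC₁def]; field_simp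
  -- elementary bounds on the bounded terms
  have hu0 : 0 ≤ z * (C₁ / (z + 1)) := by positivity
  have hu : z * (C₁ / (z + 1)) ≤ C₁ := by
    rw [mul_div_assoc', div_le_iff₀ hz1']
    nlinarith
  have hv : z ^ 2 * (C₁ / (z + 1) ^ 2) ≤ C₁ := by
    rw [mul_div_assoc', div_le_iff₀ (by positivity : (0:ℝ) < (z+1)^2)]
    nlinarith
  have hw0 : 0 ≤ C₁ / (z + 1) := by positivity
  have hw : C₁ / (z + 1) ≤ C₁ := by
    rw [div_le_iff₀ hz1']
    nlinarith
  have hA : -(d₂ * C₁) ≤ d₂ * z ^ 2 * (-(C₁ / (z + 1) ^ 2)) := by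
    have h2 : d₂ * (z ^ 2 * (C₁ / (z + 1) ^ 2)) ≤ d₂ * C₁ :=
      mul_le_mul_of_nonneg_left hv (le_of_lt hd₂)
    have h3 : d₂ * z ^ 2 * (-(C₁ / (z + 1) ^ 2)) = -(d₂ * (z ^ 2 * (C₁ / (z + 1) ^ 2))) := by
      ring
    linarith
  have hB : -(|d₃| * C₁) ≤ d₃ * z * (C₁ / (z + 1)) := by
    have h1 : -|d₃| ≤ d₃ := neg_abs_le d₃
    have h2 : d₃ * (z * (C₁ / (z + 1))) ≥ -|d₃| * (z * (C₁ / (z + 1))) :=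
      mul_le_mul_of_nonneg_right h1 hu0
    have h3 : |d₃| * (z * (C₁ / (z + 1))) ≤ |d₃| * C₁ :=
      mul_le_mul_of_nonneg_left hu (abs_nonneg d₃)
    have h4 : d₃ * z * (C₁ / (z + 1)) = d₃ * (z * (C₁ / (z + 1))) := by ring
    linarith
  have hC : -(|δ| * C₁) ≤ δ * (C₁ / (z + 1)) := by
    have h1 : -|δ| ≤ δ := neg_abs_le δ
    have h2 : δ * (C₁ / (z + 1)) ≥ -|δ| * (C₁ / (z + 1)) :=
      mul_le_mul_of_nonneg_right h1 hw0
    have h3 : |δ| * (C₁ / (z + 1)) ≤ |δ| * C₁ :=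
      mul_le_mul_of_nonneg_left hw (abs_nonneg δ)
    linarith
  -- the logarithmic term dominates
  have hlogz : 2 * (d₂ * C₁ + |d₃| * C₁ + |δ| * C₁ + 1 + |Real.log C₁|) ≤ Real.log z :=
    (Real.le_log_iff_exp_le hz0).mpr hzexp
  have hlogz1 : Real.log z ≤ Real.log (z + 1) :=
    Real.log_le_log hz0 (by linarith)
  have hlogC₁ : Real.log C₁ ≤ |Real.log C₁| := le_abs_self _
  have hpos : 0 ≤ (d₁ ^ 2 / 2) * C₁ := by positivity
  have hκterm : κ * (C₁ * Real.log (z + 1)) = (1 / 2) * Real.log (z + 1) := by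
    rw [← mul_assoc, hκC]
  rw [hκterm]
  linarith
end
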